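/- Let R be a ring satisfying: (a) there exists a finite set {e_i}_{i∈I} of orthogonal idempotents of R such that each e_iR is a local injective right R-module of composition length two and J(R_R) = ⊕_{i∈I} J(e_iR); (b) R/J(R) is a right SV-ring and the Loewy length of R_R is at most 2; (c) R/SI(R_R) is a right artinian ring. Then every injective right R-module E containing a simple module S as an essential submodule satisfies: either E = S or E is a local projective module of composition length two. -/

import Mathlib

universe u v w

section Defs

variable (A : Type u) [Ring A]

/-- The radical of a module: the intersection of all maximal submodules
(`⊤` if there are none). -/
def modRad (M : Type w) [AddCommGroup M] [Module A M] : Submodule A M :=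
  sInf {P : Submodule A M | IsCoatom P}

/-- The socle of a module: the sum of all simple submodules. -/
def modSocle (M : Type w) [AddCommGroup M] [Module A M] : Submodule A M :=
  sSup {S : Submodule A M | IsAtom S}

/-- A submodule `N` of `M` is small if `N ⊔ K = ⊤` implies `K = ⊤`. -/
def IsSmallSubmodule {M : Type w} [AddCommGroup M] [Module A M] (N : Submodule A M) : Prop :=
  ∀ K : Submodule A M, N ⊔ K = ⊤ → K = ⊤

/-- `N` is a direct summand of `M`. -/
def IsDirectSummand {M : Type w} [AddCommGroup M] [Module A M] (N : Submodule A M) : Prop :=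
  ∃ N' : Submodule A M, IsCompl N N'

/-- `N` is an essential submodule of `M`. -/
def IsEssentialSubmodule {M : Type w} [AddCommGroup M] [Module A M] (N : Submodule A M) : Prop :=
  ∀ K : Submodule A M, K ≠ ⊥ → N ⊓ K ≠ ⊥

/-- An `I₀`-module: every non-small submodule contains a nonzero direct summand. -/
def IsI0Module (M : Type w) [AddCommGroup M] [Module A M] : Prop :=
  ∀ N : Submodule A M, ¬ IsSmallSubmodule A N →
    ∃ D : Submodule A M, D ≠ ⊥ ∧ D ≤ N ∧ IsDirectSummand A D

/-- A `V`-module: every proper submodule is an intersection of maximal submodules. -/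
def IsVModule (M : Type w) [AddCommGroup M] [Module A M] : Prop :=
  ∀ N : Submodule A M, N ≠ ⊤ →
    ∃ S : Set (Submodule A M), (∀ P ∈ S, IsCoatom P) ∧ N = sInf S

/-- A local module: it has a proper submodule containing every proper submodule. -/
def IsLocalModule (M : Type w) [AddCommGroup M] [Module A M] : Prop :=
  ∃ P : Submodule A M, P ≠ ⊤ ∧ ∀ K : Submodule A M, K ≠ ⊤ → K ≤ P

/-- A module of composition length two: it has a submodule which is simultaneously an atom
and a coatom of its submodule lattice, i.e. a composition series `0 ⋖ S ⋖ M`. -/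
def HasLengthTwo (M : Type w) [AddCommGroup M] [Module A M] : Prop :=
  ∃ S : Submodule A M, IsAtom S ∧ IsCoatom S

/-- A uniform module: nonzero, and any two nonzero submodules intersect nontrivially. -/
def IsUniformModule (M : Type w) [AddCommGroup M] [Module A M] : Prop :=
  Nontrivial M ∧ ∀ K L : Submodule A M, K ≠ ⊥ → L ≠ ⊥ → K ⊓ L ≠ ⊥

/-- A uniserial module: submodules are linearly ordered by inclusion. -/
def IsUniserialModule (M : Type w) [AddCommGroup M] [Module A M] : Prop :=
  ∀ K L : Submodule A M, K ≤ L ∨ L ≤ K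

/-- A semiartinian module: every nonzero quotient has a nonzero socle. -/
def IsSemiartinianModule (M : Type w) [AddCommGroup M] [Module A M] : Prop :=
  ∀ N : Submodule A M, N ≠ ⊤ → modSocle A (M ⧸ N) ≠ ⊥

/-- `U` is `M`-injective: homomorphisms from submodules of `M` to `U` extend to `M`. -/
def RelInjective (M : Type v) (U : Type w) [AddCommGroup M] [Module A M]
    [AddCommGroup U] [Module A U] : Prop :=
  ∀ (K : Submodule A M) (f : K →ₗ[A] U), ∃ g : M →ₗ[A] U, ∀ x : K, g (x : M) = f x

/-- `P` is `M`-projective: homomorphisms from `P` to quotients of `M` lift to `M`. -/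
def RelProjective (M : Type v) (P : Type w) [AddCommGroup M] [Module A M]
    [AddCommGroup P] [Module A P] : Prop :=
  ∀ (K : Submodule A M) (f : P →ₗ[A] M ⧸ K), ∃ h : P →ₗ[A] M, ∀ x : P, K.mkQ (h x) = f x

/-- `M` is almost `N`-projective. -/
def AlmostNProjective (M : Type v) (N : Type w) [AddCommGroup M] [Module A M]
    [AddCommGroup N] [Module A N] : Prop :=
  ∀ (K : Submodule A N) (f : M →ₗ[A] N ⧸ K),
    (∃ h : M →ₗ[A] N, ∀ x : M, K.mkQ (h x) = f x) ∨
    (∃ N' : Submodule A N, N' ≠ ⊥ ∧ IsDirectSummand A N' ∧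
      ∃ h' : N' →ₗ[A] M, ∀ x : N', K.mkQ (x : N) = f (h' x))

/-- `M` is almost projective: almost `N`-projective for every module `N`. -/
def IsAlmostProjective (M : Type w) [AddCommGroup M] [Module A M] : Prop :=
  ∀ (N : Type v) [AddCommGroup N] [Module A N], AlmostNProjective A M N

/-- `M` is almost `N`-injective. -/
def AlmostNInjective (M : Type v) (N : Type w) [AddCommGroup M] [Module A M]
    [AddCommGroup N] [Module A N] : Prop :=
  ∀ (N₀ : Submodule A N) (f : N₀ →ₗ[A] M),
    (∃ g : N →ₗ[A] M, ∀ x : N₀, g (x : N) = f x) ∨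
    (∃ π : Module.End A N, IsIdempotentElem π ∧ π ≠ 0 ∧
      ∃ h : M →ₗ[A] LinearMap.range π, ∀ x : N₀, (↑(h (f x)) : N) = π (x : N))

/-- `M` is almost injective: almost `N`-injective for every module `N`. -/
def IsAlmostInjective (M : Type w) [AddCommGroup M] [Module A M] : Prop :=
  ∀ (N : Type v) [AddCommGroup N] [Module A N], AlmostNInjective A M N

/-- `N` belongs to `σ(M)`: `N` is isomorphic to a submodule of a quotient of a direct sum
of copies of `M`. -/
def InSigma (M : Type v) [AddCommGroup M] [Module A M]
    (N : Type w) [AddCommGroup N] [Module A N] : Prop :=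
  ∃ (ι : Type v) (K : Submodule A (ι →₀ M)) (P : Submodule A ((ι →₀ M) ⧸ K)),
    Nonempty (N ≃ₗ[A] P)

/-- `P` is a projective object of the category `σ(M)`. -/
def ProjInSigma (M : Type v) [AddCommGroup M] [Module A M]
    (P : Type w) [AddCommGroup P] [Module A P] : Prop :=
  InSigma A M P ∧
  ∀ (X Y : Type v) [AddCommGroup X] [Module A X] [AddCommGroup Y] [Module A Y],
    InSigma A M X → InSigma A M Y →
    ∀ (g : X →ₗ[A] Y), Function.Surjective g →
    ∀ f : P →ₗ[A] Y, ∃ h : P →ₗ[A] X, ∀ x : P, g (h x) = f x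

/-- `M` is an almost `V`-module: every simple module is almost `N`-injective
for every `N ∈ σ(M)`. -/
def IsAlmostVModule (M : Type v) [AddCommGroup M] [Module A M] : Prop :=
  ∀ (S : Type v) [AddCommGroup S] [Module A S], IsSimpleModule A S →
    ∀ (N : Type v) [AddCommGroup N] [Module A N], InSigma A M N → AlmostNInjective A S N

end Defs

/-- `SI(R_R)`: the sum of all simple injective submodules of the right regular module. -/
def SIdeal (R : Type u) [Ring R] : Submodule Rᵐᵒᵖ R :=
  sSup {T : Submodule Rᵐᵒᵖ R | IsAtom T ∧ Module.Injective Rᵐᵒᵖ ↥T}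

/-- Condition (a): there is a finite set of orthogonal idempotents `eᵢ` such that each
`eᵢR` is a local injective right module of length two and `J(R_R) = ⊕ J(eᵢR)`. -/
def HypA (R : Type u) [Ring R] : Prop :=
  ∃ (n : ℕ) (e : Fin n → R),
    (∀ i, IsIdempotentElem (e i)) ∧
    (∀ i j, i ≠ j → e i * e j = 0) ∧
    (∀ i, IsLocalModule Rᵐᵒᵖ ↥(Submodule.span Rᵐᵒᵖ ({e i} : Set R)) ∧
      Module.Injective Rᵐᵒᵖ ↥(Submodule.span Rᵐᵒᵖ ({e i} : Set R)) ∧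
      HasLengthTwo Rᵐᵒᵖ ↥(Submodule.span Rᵐᵒᵖ ({e i} : Set R))) ∧
    iSupIndep (fun i => Submodule.span Rᵐᵒᵖ ({e i} : Set R)) ∧
    modRad Rᵐᵒᵖ R =
      ⨆ i, (modRad Rᵐᵒᵖ ↥(Submodule.span Rᵐᵒᵖ ({e i} : Set R))).map
        (Submodule.span Rᵐᵒᵖ ({e i} : Set R)).subtype

/-- Condition (b): `R/J(R)` is a right `SV`-ring and the Loewy length of `R_R` is at
most `2` (i.e. `R/Soc(R_R)` is semisimple). -/
def HypB (R : Type u) [Ring R] : Prop :=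
  (∃ c : RingCon R, (∀ x : R, c x 0 ↔ x ∈ modRad Rᵐᵒᵖ R) ∧
      IsSemiartinianModule (RingCon.Quotient c)ᵐᵒᵖ (RingCon.Quotient c) ∧
      IsVModule (RingCon.Quotient c)ᵐᵒᵖ (RingCon.Quotient c)) ∧
  IsSemisimpleModule Rᵐᵒᵖ (R ⧸ modSocle Rᵐᵒᵖ R)

/-- Condition (c): `R/SI(R_R)` is a right artinian ring. -/
def HypC (R : Type u) [Ring R] : Prop :=
  ∃ c : RingCon R, (∀ x : R, c x 0 ↔ x ∈ SIdeal R) ∧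
    IsArtinian (RingCon.Quotient c)ᵐᵒᵖ (RingCon.Quotient c)

namespace L31Helpers

variable {R : Type u} [Ring R]

/-- `op` as a linear equiv from `R` (right module over itself) to `Rᵐᵒᵖ`. -/
def rho : R ≃ₗ[Rᵐᵒᵖ] Rᵐᵒᵖ where
  toFun := MulOpposite.op
  invFun := MulOpposite.unop
  map_add' _ _ := rfl
  map_smul' _ _ := rfl
  left_inv _ := rfl
  right_inv _ := rfl

/-- Baer criterion with respect to right ideals of `R`. -/
def BaerCrit (R : Type u) [Ring R] (Q : Type w) [AddCommGroup Q] [Module Rᵐᵒᵖ Q] : Prop :=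
  ∀ (I : Submodule Rᵐᵒᵖ R) (f : ↥I →ₗ[Rᵐᵒᵖ] Q), ∃ g : R →ₗ[Rᵐᵒᵖ] Q, ∀ x : ↥I, g x = f x

lemma baerCrit_of_injective (Q : Type u) [AddCommGroup Q] [Module Rᵐᵒᵖ Q]
    (hQ : Module.Injective Rᵐᵒᵖ Q) : BaerCrit R Q := by
  intro I f
  obtain ⟨h, hh⟩ := hQ.out I.subtype Subtype.val_injective f
  exact ⟨h, hh⟩

lemma baer_of_baerCrit (Q : Type w) [AddCommGroup Q] [Module Rᵐᵒᵖ Q]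
    (hQ : BaerCrit R Q) : Module.Baer Rᵐᵒᵖ Q := by
  intro I g
  set I' : Submodule Rᵐᵒᵖ R := Submodule.comap (rho.toLinearMap : R →ₗ[Rᵐᵒᵖ] Rᵐᵒᵖ) I with hI'
  let r1 : ↥I' →ₗ[Rᵐᵒᵖ] ↥I := (rho.toLinearMap.domRestrict I').codRestrict I (fun x =>
    Submodule.mem_comap.mp x.2)
  obtain ⟨g0, hg0⟩ := hQ I' (g.comp r1)
  refine ⟨g0.comp rho.symm.toLinearMap, fun x mem => ?_⟩
  have hx' : rho.symm x ∈ I' := by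
    simp only [hI', Submodule.mem_comap, LinearEquiv.coe_coe, LinearEquiv.apply_symm_apply]
    exact mem
  have := hg0 ⟨rho.symm x, hx'⟩
  simp only [LinearMap.comp_apply, LinearEquiv.coe_coe] at this ⊢
  rw [this]
  exact congrArg g (Subtype.ext rfl)

lemma extension_of_baerCrit (Q : Type w) [AddCommGroup Q] [Module Rᵐᵒᵖ Q] (hQ : BaerCrit R Q)
    {M : Type v} [AddCommGroup M] [Module Rᵐᵒᵖ M] (K : Submodule Rᵐᵒᵖ M)
    (f : ↥K →ₗ[Rᵐᵒᵖ] Q) : ∃ g : M →ₗ[Rᵐᵒᵖ] Q, ∀ x : ↥K, g x = f x := by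
  have hbaer : Module.Baer Rᵐᵒᵖ (ULift.{max u v} Q) := by
    have h0 := baer_of_baerCrit Q hQ
    intro I gg
    obtain ⟨g', hg'⟩ := h0 I (ULift.moduleEquiv.toLinearMap.comp gg)
    refine ⟨ULift.moduleEquiv.symm.toLinearMap.comp g', fun x mem => ?_⟩
    simp only [LinearMap.comp_apply, LinearEquiv.coe_coe] at hg' ⊢
    rw [hg' x mem]
    exact ULift.moduleEquiv.symm_apply_apply _
  have hinj : Module.Injective Rᵐᵒᵖ (ULift.{max u v} Q) := hbaer.injective
  let eK : ULift.{max u w} ↥K ≃ₗ[Rᵐᵒᵖ] ↥K := ULift.moduleEquiv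
  let eM : ULift.{max u w} M ≃ₗ[Rᵐᵒᵖ] M := ULift.moduleEquiv
  let F : ULift.{max u w} ↥K →ₗ[Rᵐᵒᵖ] ULift.{max u w} M :=
    eM.symm.toLinearMap ∘ₗ K.subtype ∘ₗ eK.toLinearMap
  have hFinj : Function.Injective F := by
    intro a b hab
    apply eK.injective
    apply Subtype.val_injective
    exact eM.symm.injective hab
  obtain ⟨h, hh⟩ := hinj.out F hFinj
    ((ULift.moduleEquiv.symm.toLinearMap : Q →ₗ[Rᵐᵒᵖ] ULift.{max u v} Q).comp
      (f.comp eK.toLinearMap))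
  refine ⟨ULift.moduleEquiv.toLinearMap ∘ₗ h ∘ₗ eM.symm.toLinearMap, fun x => ?_⟩
  have := hh (eK.symm x)
  simp only [LinearMap.comp_apply, LinearEquiv.coe_coe, F] at this ⊢
  rw [LinearEquiv.apply_symm_apply] at this
  have h2 : h (eM.symm ↑x) = ULift.moduleEquiv.symm (f x) := this
  rw [h2, LinearEquiv.apply_symm_apply]

section GenRing

variable {A : Type u} [Ring A]

lemma glueZero {M : Type v} [AddCommGroup M] [Module A M] {Q : Type w} [AddCommGroup Q]
    [Module A Q] (I K : Submodule A M) (f : ↥I →ₗ[A] Q)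
    (hf : ∀ (x : M) (hx : x ∈ I), x ∈ K → f ⟨x, hx⟩ = 0) :
    ∃ F : ↥(I ⊔ K) →ₗ[A] Q,
      (∀ (x : M) (hx : x ∈ I) (hx2 : x ∈ I ⊔ K), F ⟨x, hx2⟩ = f ⟨x, hx⟩) ∧
      (∀ (y : M) (hy : y ∈ K) (hy2 : y ∈ I ⊔ K), F ⟨y, hy2⟩ = 0) := by
  have hker : Submodule.comap I.subtype (I ⊓ K) ≤ LinearMap.ker f := by
    intro x hx
    have hx' : (x : M) ∈ I ⊓ K := hx
    exact hf x x.2 hx'.2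
  let fbar := (Submodule.comap I.subtype (I ⊓ K)).liftQ f hker
  let e := LinearMap.quotientInfEquivSupQuotient I K
  let F := fbar ∘ₗ e.symm.toLinearMap ∘ₗ (Submodule.comap (I ⊔ K).subtype K).mkQ
  refine ⟨F, fun x hx hx2 => ?_, fun y hy hy2 => ?_⟩
  · have he : e (Submodule.Quotient.mk ⟨x, hx⟩) =
        Submodule.Quotient.mk ⟨x, hx2⟩ := by
      rw [LinearMap.quotientInfEquivSupQuotient_apply_mk]
      rfl
    have hsymm : e.symm (Submodule.Quotient.mk ⟨x, hx2⟩) =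
        Submodule.Quotient.mk ⟨x, hx⟩ := by
      rw [← he, LinearEquiv.symm_apply_apply]
    show fbar (e.symm (Submodule.Quotient.mk ⟨x, hx2⟩)) = f ⟨x, hx⟩
    rw [hsymm]
    rfl
  · have h0 : (Submodule.Quotient.mk (⟨y, hy2⟩ : ↥(I ⊔ K)) :
        ↥(I ⊔ K) ⧸ Submodule.comap (I ⊔ K).subtype K) = 0 :=
      (Submodule.Quotient.mk_eq_zero _).mpr hy
    show fbar (e.symm (Submodule.Quotient.mk ⟨y, hy2⟩)) = 0
    rw [h0, map_zero]
    exact map_zero fbar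

/-- In a local module with an atom-coatom submodule, the submodules are `⊥, S₀, ⊤`. -/
lemma trichotomy {P : Type w} [AddCommGroup P] [Module A P] (hloc : IsLocalModule A P)
    {S0 : Submodule A P} (hatom : IsAtom S0) (hco : IsCoatom S0) :
    ∀ K : Submodule A P, K = ⊥ ∨ K = S0 ∨ K = ⊤ := by
  obtain ⟨Pm, hPm, hall⟩ := hloc
  have hPS : Pm = S0 := by
    have h1 : S0 ≤ Pm := hall S0 hco.1
    rcases lt_or_eq_of_le h1 with h | h
    · exact absurd (hco.2 Pm h) hPm
    · exact h.symm
  intro K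
  by_cases hK : K = ⊤
  · exact Or.inr (Or.inr hK)
  · have h2 : K ≤ S0 := hPS ▸ hall K hK
    rcases lt_or_eq_of_le h2 with h | h
    · exact Or.inl (hatom.2 K h)
    · exact Or.inr (Or.inl h)

lemma modRad_eq_of_local {P : Type w} [AddCommGroup P] [Module A P] (hloc : IsLocalModule A P)
    {S0 : Submodule A P} (hatom : IsAtom S0) (hco : IsCoatom S0) : modRad A P = S0 := by
  obtain ⟨Pm, hPm, hall⟩ := hloc
  have hPS : Pm = S0 := by
    have h1 : S0 ≤ Pm := hall S0 hco.1
    rcases lt_or_eq_of_le h1 with h | h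
    · exact absurd (hco.2 Pm h) hPm
    · exact h.symm
  have hset : {C : Submodule A P | IsCoatom C} = {S0} := by
    ext C
    simp only [Set.mem_setOf_eq, Set.mem_singleton_iff]
    constructor
    · intro hC
      have h1 : C ≤ S0 := hPS ▸ hall C hC.1
      rcases lt_or_eq_of_le h1 with h | h
      · exact absurd (hC.2 S0 h) hco.1
      · exact h
    · rintro rfl; exact hco
  rw [modRad, hset, sInf_singleton]

lemma isAtom_map_subtype {M : Type v} [AddCommGroup M] [Module A M] (p : Submodule A M)
    (S0 : Submodule A ↥p) (h : IsAtom S0) : IsAtom (S0.map p.subtype) := by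
  have h1 : IsSimpleModule A ↥S0 := isSimpleModule_iff_isAtom.mpr h
  have h2 : IsSimpleModule A ↥(S0.map p.subtype) :=
    IsSimpleModule.congr (Submodule.equivMapOfInjective p.subtype p.injective_subtype S0).symm
  exact isSimpleModule_iff_isAtom.mp h2

/-- If the target is a simple module, every proper submodule containing `ker f` equals `ker f`. -/
lemma ker_coatom_aux {M : Type v} [AddCommGroup M] [Module A M] {Q : Type w} [AddCommGroup Q]
    [Module A Q] (hQ : IsSimpleModule A Q) (f : M →ₗ[A] Q)
    (W : Submodule A M) (hW1 : LinearMap.ker f ≤ W) (hW2 : W ≠ ⊤) : W ≤ LinearMap.ker f := by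
  rcases eq_bot_or_eq_top (W.map f) with h | h
  · intro w hw
    have : f w ∈ W.map f := Submodule.mem_map_of_mem hw
    rw [h] at this
    exact (Submodule.mem_bot A).mp this
  · exfalso
    apply hW2
    rw [eq_top_iff]
    intro x _
    have hfx : f x ∈ W.map f := by rw [h]; trivial
    obtain ⟨wo, hwo, hwoeq⟩ := hfx
    have hker : x - wo ∈ LinearMap.ker f := by
      simp [LinearMap.mem_ker, map_sub, hwoeq]
    have hxw : x - wo ∈ W := hW1 hker
    simpa using W.add_mem hxw hwo

end GenRing

lemma exists_coatom_above (c : RingCon R) (hc : ∀ x : R, c x 0 ↔ x ∈ modRad Rᵐᵒᵖ R)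
    (hV : IsVModule (RingCon.Quotient c)ᵐᵒᵖ (RingCon.Quotient c))
    (K : Submodule Rᵐᵒᵖ R) (hJK : modRad Rᵐᵒᵖ R ≤ K) (hK : K ≠ ⊤)
    (x : R) (hx : x ∉ K) :
    ∃ m : Submodule Rᵐᵒᵖ R, IsCoatom m ∧ K ≤ m ∧ x ∉ m := by
  set Q := RingCon.Quotient c with hQdef
  have hsurj : Function.Surjective (fun r : R => (r : Q)) := fun q => by
    obtain ⟨r, hr⟩ := Quotient.exists_rep q; exact ⟨r, hr⟩
  have smulQ : ∀ (q : Qᵐᵒᵖ) (y : Q), q • y = y * q.unop := fun q y => by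
    rw [← MulOpposite.op_unop q, op_smul_eq_mul, MulOpposite.unop_op]
  have smulR : ∀ (r : Rᵐᵒᵖ) (a : R), r • a = a * r.unop := fun r a => by
    rw [← MulOpposite.op_unop r, op_smul_eq_mul, MulOpposite.unop_op]
  let push : Submodule Rᵐᵒᵖ R → Submodule Qᵐᵒᵖ Q := fun N =>
    { carrier := (fun r : R => (r : Q)) '' N
      add_mem' := by
        rintro _ _ ⟨a, ha, rfl⟩ ⟨b, hb, rfl⟩
        exact ⟨a + b, N.add_mem ha hb, by push_cast; rfl⟩
      zero_mem' := ⟨0, N.zero_mem, rfl⟩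
      smul_mem' := by
        rintro q _ ⟨a, ha, rfl⟩
        obtain ⟨r, hr⟩ := hsurj q.unop
        refine ⟨a * r, ?_, ?_⟩
        · have := N.smul_mem (MulOpposite.op r) ha
          rwa [smulR] at this
        · rw [smulQ, ← hr]; push_cast; rfl }
  let pull : Submodule Qᵐᵒᵖ Q → Submodule Rᵐᵒᵖ R := fun N =>
    { carrier := (fun r : R => (r : Q)) ⁻¹' N
      add_mem' := fun {a b} ha hb => by
        simp only [Set.mem_preimage] at *
        rw [show ((a + b : R) : Q) = (a : Q) + (b : Q) by push_cast; rfl]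
        exact N.add_mem ha hb
      zero_mem' := by
        simp only [Set.mem_preimage]
        rw [show ((0 : R) : Q) = 0 from rfl]
        exact N.zero_mem
      smul_mem' := fun r a ha => by
        simp only [Set.mem_preimage] at *
        rw [smulR]
        rw [show ((a * r.unop : R) : Q) = (a : Q) * (r.unop : Q) by push_cast; rfl]
        have := N.smul_mem (MulOpposite.op ((r.unop : Q))) ha
        rwa [smulQ] at this }
  have hmempush : ∀ (N : Submodule Rᵐᵒᵖ R) (a : R), a ∈ N → (a : Q) ∈ push N :=
    fun N a ha => ⟨a, ha, rfl⟩
  have hJpull : ∀ N : Submodule Qᵐᵒᵖ Q, modRad Rᵐᵒᵖ R ≤ pull N := by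
    intro N a ha
    have h0 : c a 0 := (hc a).mpr ha
    show ((a : R) : Q) ∈ N
    have : ((a : R) : Q) = ((0 : R) : Q) := c.eq.mpr h0
    rw [this, show ((0 : R) : Q) = 0 from rfl]
    exact N.zero_mem
  have hpullpush : ∀ N : Submodule Rᵐᵒᵖ R, modRad Rᵐᵒᵖ R ≤ N → pull (push N) = N := by
    intro N hJN
    apply le_antisymm
    · intro a ha
      obtain ⟨b, hb, hba⟩ := ha
      have hcab : c a b := c.eq.mp hba.symm
      have hsub : c (a - b) 0 := by
        have := c.add hcab (c.refl (-b))
        simpa [sub_eq_add_neg] using this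
      have : a - b ∈ N := hJN ((hc _).mp hsub)
      simpa using N.add_mem this hb
    · intro a ha; exact hmempush N a ha
  have hpushpull : ∀ N : Submodule Qᵐᵒᵖ Q, push (pull N) = N := by
    intro N
    apply le_antisymm
    · rintro _ ⟨a, ha, rfl⟩; exact ha
    · intro q hq
      obtain ⟨r, hr⟩ := hsurj q
      exact ⟨r, by show ((r : R) : Q) ∈ N; rw [show ((r : R) : Q) = q from hr]; exact hq, hr⟩
  have hpushmono : Monotone push := by
    rintro N₁ N₂ h _ ⟨a, ha, rfl⟩; exact ⟨a, h ha, rfl⟩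
  have hpullmono : Monotone pull := fun N₁ N₂ h a ha => h ha
  have hpulltop : pull ⊤ = ⊤ := by
    rw [eq_top_iff]; intro a _; trivial
  have honemem : ∀ N : Submodule Qᵐᵒᵖ Q, (1 : Q) ∈ N → N = ⊤ := by
    intro N h1
    rw [eq_top_iff]
    intro q _
    have := N.smul_mem (MulOpposite.op q) h1
    rwa [op_smul_eq_mul, one_mul] at this
  have hKbar : push K ≠ ⊤ := by
    intro h
    apply hK
    rw [← hpullpush K hJK, h, hpulltop]
  obtain ⟨Sc, hSco, hSeq⟩ := hV (push K) hKbar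
  have hxbar : (x : Q) ∉ push K := by
    intro h
    apply hx
    rw [← hpullpush K hJK]
    exact h
  have hxns : (x : Q) ∉ sInf Sc := hSeq ▸ hxbar
  have hex : ∃ mbar ∈ Sc, (x : Q) ∉ mbar := by
    by_contra h
    push_neg at h
    exact hxns (Submodule.mem_sInf.mpr fun p hp => h p hp)
  obtain ⟨mbar, hmbarS, hxm⟩ := hex
  have hmco : IsCoatom mbar := hSco mbar hmbarS
  refine ⟨pull mbar, ⟨?_, ?_⟩, ?_, hxm⟩
  · intro h
    have h1m : (1 : R) ∈ pull mbar := by rw [h]; trivial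
    have h1 : (1 : Q) ∈ mbar := h1m
    exact hmco.1 (honemem mbar h1)
  · intro b hb
    have hJb : modRad Rᵐᵒᵖ R ≤ b := le_trans (hJpull mbar) hb.le
    have hmb : mbar ≤ push b := by
      rw [← hpushpull mbar]
      exact hpushmono hb.le
    rcases lt_or_eq_of_le hmb with h | h
    · have htop := hmco.2 _ h
      rw [← hpullpush b hJb, htop, hpulltop]
    · exfalso
      have : b = pull mbar := by rw [← hpullpush b hJb, ← h]
      exact hb.ne' this
  · have h1 : push K ≤ mbar := hSeq ▸ sInf_le hmbarS
    calc K = pull (push K) := (hpullpush K hJK).symm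
    _ ≤ pull mbar := hpullmono h1

end L31Helpers

/-- Lemma 3.1 (1): under conditions (a), (b), (c) the injective hull of every simple right
module is either simple or a local projective module of length two. -/
theorem lemma31_injective_hull (R : Type u) [Ring R]
    (hA : HypA R) (hB : HypB R) (hC : HypC R)
    (E : Type v) [AddCommGroup E] [Module Rᵐᵒᵖ E] (hE : Module.Injective Rᵐᵒᵖ E)
    (S : Submodule Rᵐᵒᵖ E) (hS : IsSimpleModule Rᵐᵒᵖ ↥S)
    (hess : IsEssentialSubmodule Rᵐᵒᵖ S) :
    S = ⊤ ∨
      (IsLocalModule Rᵐᵒᵖ E ∧ Module.Projective Rᵐᵒᵖ E ∧ HasLengthTwo Rᵐᵒᵖ E) := by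
  classical
  obtain ⟨n, e, hidem, _horth, hPi, _hindep, hJeq⟩ := hA
  obtain ⟨⟨c, hc, _hsa, hV⟩, _hloewy⟩ := hB
  set P : Fin n → Submodule Rᵐᵒᵖ R := fun i => Submodule.span Rᵐᵒᵖ ({e i} : Set R) with hPdef
  have hPloc : ∀ i, IsLocalModule Rᵐᵒᵖ ↥(P i) := fun i => (hPi i).1
  have hPinj : ∀ i, Module.Injective Rᵐᵒᵖ ↥(P i) := fun i => (hPi i).2.1
  choose S0 hS0atom hS0co using fun i => (hPi i).2.2
  set T : Fin n → Submodule Rᵐᵒᵖ R := fun i => (S0 i).map (P i).subtype with hTdef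
  have hradP : ∀ i, modRad Rᵐᵒᵖ ↥(P i) = S0 i :=
    fun i => L31Helpers.modRad_eq_of_local (hPloc i) (hS0atom i) (hS0co i)
  set Jid : Submodule Rᵐᵒᵖ R := modRad Rᵐᵒᵖ R with hJdef
  have hJT : Jid = ⨆ i, T i := by
    rw [hJeq]
    exact iSup_congr fun i => by
      rw [show modRad Rᵐᵒᵖ ↥(Submodule.span Rᵐᵒᵖ ({e i} : Set R)) = S0 i from hradP i]
  have hTatom : ∀ i, IsAtom (T i) := fun i => L31Helpers.isAtom_map_subtype _ _ (hS0atom i)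
  have hTle : ∀ i, T i ≤ Jid := fun i => hJT ▸ le_iSup T i
  have hSatom : IsAtom S := isSimpleModule_iff_isAtom.mp hS
  by_cases hcase : ∃ i, ∃ φ : ↥(T i) →ₗ[Rᵐᵒᵖ] ↥S, φ ≠ 0
  · -- Case (i): `S` is isomorphic to the socle of some `P i`.
    obtain ⟨i, φ, hφ⟩ := hcase
    haveI hTsimple : IsSimpleModule Rᵐᵒᵖ ↥(T i) := isSimpleModule_iff_isAtom.mpr (hTatom i)
    have hker : LinearMap.ker φ = ⊥ := by
      rcases eq_bot_or_eq_top (LinearMap.ker φ) with h | h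
      · exact h
      · exact absurd (LinearMap.ker_eq_top.mp h) hφ
    have hrange : LinearMap.range φ = ⊤ := by
      rcases eq_bot_or_eq_top (LinearMap.range φ) with h | h
      · exact absurd (LinearMap.range_eq_bot.mp h) hφ
      · exact h
    let φe : ↥(T i) ≃ₗ[Rᵐᵒᵖ] ↥S := LinearEquiv.ofBijective φ
      ⟨LinearMap.ker_eq_bot.mp hker, LinearMap.range_eq_top.mp hrange⟩
    let em : ↥(S0 i) ≃ₗ[Rᵐᵒᵖ] ↥(T i) :=
      Submodule.equivMapOfInjective (P i).subtype (P i).injective_subtype (S0 i)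
    let f0 : ↥S →ₗ[Rᵐᵒᵖ] ↥(P i) :=
      (S0 i).subtype ∘ₗ em.symm.toLinearMap ∘ₗ φe.symm.toLinearMap
    have hf0inj : Function.Injective f0 := by
      intro a b hab
      apply φe.symm.injective
      apply em.symm.injective
      exact Subtype.val_injective hab
    have hbc : L31Helpers.BaerCrit R ↥(P i) := L31Helpers.baerCrit_of_injective _ (hPinj i)
    obtain ⟨g, hg⟩ := L31Helpers.extension_of_baerCrit _ hbc S f0
    obtain ⟨s1, hs1S, hs1ne⟩ := Submodule.ne_bot_iff S |>.mp hSatom.1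
    have hker_g : LinearMap.ker g = ⊥ := by
      by_contra hne
      have h2 := hess _ hne
      have h3 : S ⊓ LinearMap.ker g = S := by
        rcases lt_or_eq_of_le (inf_le_left : S ⊓ LinearMap.ker g ≤ S) with h | h
        · exact absurd (hSatom.2 _ h) h2
        · exact h
      have h4 : S ≤ LinearMap.ker g := inf_eq_left.mp h3
      have h5 : g s1 = 0 := h4 hs1S
      have h6 : g s1 = f0 ⟨s1, hs1S⟩ := hg ⟨s1, hs1S⟩
      have h7 : f0 ⟨s1, hs1S⟩ = 0 := by rw [← h6, h5]
      have h8 : (⟨s1, hs1S⟩ : ↥S) = 0 := hf0inj (by rw [h7, map_zero])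
      exact hs1ne (congrArg Subtype.val h8)
    have hginj : Function.Injective g := LinearMap.ker_eq_bot.mp hker_g
    have hrange_ne_bot : LinearMap.range g ≠ ⊥ := by
      intro h
      have : g s1 = 0 := by
        have : g s1 ∈ LinearMap.range g := LinearMap.mem_range_self g s1
        rw [h] at this
        exact (Submodule.mem_bot _).mp this
      have h6 : g s1 = f0 ⟨s1, hs1S⟩ := hg ⟨s1, hs1S⟩
      have h8 : (⟨s1, hs1S⟩ : ↥S) = 0 := hf0inj (by rw [← h6, this, map_zero])
      exact hs1ne (congrArg Subtype.val h8)
    rcases L31Helpers.trichotomy (hPloc i) (hS0atom i) (hS0co i) (LinearMap.range g)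
      with h | h | h
    · exact absurd h hrange_ne_bot
    · -- `E` is simple, hence `S = ⊤`.
      left
      let eiso : E ≃ₗ[Rᵐᵒᵖ] ↥(LinearMap.range g) := LinearEquiv.ofInjective g hginj
      haveI hrs : IsSimpleModule Rᵐᵒᵖ ↥(LinearMap.range g) := by
        rw [h]; exact isSimpleModule_iff_isAtom.mpr (hS0atom i)
      haveI hEsimple : IsSimpleModule Rᵐᵒᵖ E := IsSimpleModule.congr (N := ↥(LinearMap.range g)) eiso
      rcases eq_bot_or_eq_top S with hb | ht
      · exact absurd hb hSatom.1
      · exact ht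
    · -- `E ≃ P i`, local projective of length two.
      right
      have hbij : Function.Bijective g := ⟨hginj, LinearMap.range_eq_top.mp h⟩
      let ge : E ≃ₗ[Rᵐᵒᵖ] ↥(P i) := LinearEquiv.ofBijective g hbij
      let oi : Submodule Rᵐᵒᵖ E ≃o Submodule Rᵐᵒᵖ ↥(P i) := Submodule.orderIsoMapComap ge
      have hoi_top : ∀ K : Submodule Rᵐᵒᵖ E, oi K = ⊤ → K = ⊤ := by
        intro K hK
        have := congrArg oi.symm hK
        rw [oi.symm_apply_apply, OrderIso.map_top] at this
        exact this
    -- local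
      refine ⟨?_, ?_, ?_⟩
      · obtain ⟨Pm, hPm, hall⟩ := hPloc i
        refine ⟨oi.symm Pm, ?_, ?_⟩
        · intro h'
          apply hPm
          have := congrArg oi h'
          rw [oi.apply_symm_apply, OrderIso.map_top] at this
          exact this
        · intro K hK
          have h1 : oi K ≠ ⊤ := fun h' => hK (hoi_top K h')
          have h2 : oi K ≤ Pm := hall (oi K) h1
          have h3 := oi.symm.monotone h2
          rwa [oi.symm_apply_apply] at h3
      · -- projective
        haveI : Module.Projective Rᵐᵒᵖ R :=
          Module.Projective.of_split (L31Helpers.rho (R := R)).toLinearMap L31Helpers.rho.symm.toLinearMap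
            (LinearMap.ext fun x => rfl)
        have hcompl : IsCompl (P i) (Submodule.span Rᵐᵒᵖ ({1 - e i} : Set R)) := by
          constructor
          · rw [disjoint_iff]
            rw [eq_bot_iff]
            intro x hx
            obtain ⟨hx1, hx2⟩ := hx
            obtain ⟨a1, ha1⟩ := Submodule.mem_span_singleton.mp hx1
            obtain ⟨a2, ha2⟩ := Submodule.mem_span_singleton.mp hx2
            rw [← MulOpposite.op_unop a1, op_smul_eq_mul] at ha1
            rw [← MulOpposite.op_unop a2, op_smul_eq_mul] at ha2
            have hex : e i * x = x := by
              rw [← ha1, ← mul_assoc, hidem i]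
            have hez : e i * x = 0 := by
              rw [← ha2, ← mul_assoc, mul_sub, mul_one, hidem i, sub_self, zero_mul]
            rw [Submodule.mem_bot, ← hex, hez]
          · rw [codisjoint_iff, eq_top_iff]
            intro x _
            have hxeq : x = e i * x + (1 - e i) * x := by rw [sub_mul, one_mul]; abel
            have h1 : e i * x ∈ P i :=
              Submodule.mem_span_singleton.mpr ⟨MulOpposite.op x, by rw [op_smul_eq_mul]⟩
            have h2 : (1 - e i) * x ∈ Submodule.span Rᵐᵒᵖ ({1 - e i} : Set R) :=
              Submodule.mem_span_singleton.mpr ⟨MulOpposite.op x, by rw [op_smul_eq_mul]⟩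
            rw [hxeq]
            exact Submodule.add_mem_sup h1 h2
        let pr : R →ₗ[Rᵐᵒᵖ] ↥(P i) := Submodule.projectionOnto _ _ hcompl
        exact Module.Projective.of_split ((P i).subtype ∘ₗ ge.toLinearMap)
          (ge.symm.toLinearMap ∘ₗ pr)
          (LinearMap.ext fun x => by
            simp only [LinearMap.comp_apply, LinearEquiv.coe_coe, LinearMap.id_apply]
            rw [show (P i).subtype (ge x) = ((ge x : ↥(P i)) : R) from rfl,
              Submodule.linearProjOfIsCompl_apply_left hcompl (ge x),
              LinearEquiv.symm_apply_apply])
      · -- length two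
        refine ⟨oi.symm (S0 i), ?_, ?_⟩
        · exact (OrderIso.isAtom_iff oi _).mp (by rw [oi.apply_symm_apply]; exact hS0atom i)
        · exact (OrderIso.isCoatom_iff oi _).mp (by rw [oi.apply_symm_apply]; exact hS0co i)
  · -- Case (ii): every map `T i → S` vanishes, and `S` is injective, so `S = ⊤`.
    push_neg at hcase
    left
    let U : Fin n → Submodule Rᵐᵒᵖ ↥Jid := fun i => (T i).comap Jid.subtype
    have hUsimple : ∀ i, IsSimpleModule Rᵐᵒᵖ ↥(U i) := by
      intro i
      haveI : IsSimpleModule Rᵐᵒᵖ ↥(T i) := isSimpleModule_iff_isAtom.mpr (hTatom i)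
      exact IsSimpleModule.congr (Submodule.comapSubtypeEquivOfLe (hTle i))
    have hUsup : (⨆ i, U i) = ⊤ := by
      apply Submodule.map_injective_of_injective Jid.injective_subtype
      rw [Submodule.map_iSup]
      have hUT : ∀ i, Submodule.map Jid.subtype (U i) = T i := fun i => by
        rw [Submodule.map_comap_subtype, inf_eq_right.mpr (hTle i)]
      simp_rw [hUT]
      rw [Submodule.map_subtype_top]
      exact hJT.symm
    haveI hss : IsSemisimpleModule Rᵐᵒᵖ ↥Jid := by
      apply IsSemisimpleModule.of_sSup_simples_eq_top
      rw [eq_top_iff, ← hUsup]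
      exact iSup_le fun i => le_sSup (hUsimple i)
    have hzero : ∀ (V : Submodule Rᵐᵒᵖ ↥Jid) (h : ↥V →ₗ[Rᵐᵒᵖ] ↥S), h = 0 := by
      intro V h
      obtain ⟨W, hW⟩ := exists_isCompl V
      let pr := Submodule.projectionOnto V W hW
      let ψ : ↥Jid →ₗ[Rᵐᵒᵖ] ↥S := h ∘ₗ pr
      have hψU : ∀ i, ∀ z ∈ U i, ψ z = 0 := by
        intro i z hz
        have h0 := hcase i ((ψ ∘ₗ (U i).subtype) ∘ₗ
          (Submodule.comapSubtypeEquivOfLe (hTle i)).symm.toLinearMap)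
        have h1 := congrArg (fun F => F (Submodule.comapSubtypeEquivOfLe (hTle i) ⟨z, hz⟩)) h0
        simp only [LinearMap.comp_apply, LinearEquiv.coe_coe, LinearEquiv.symm_apply_apply,
          LinearMap.zero_apply] at h1
        exact h1
      have hψ : ∀ z : ↥Jid, ψ z = 0 := by
        intro z
        have hz : z ∈ (⊤ : Submodule Rᵐᵒᵖ ↥Jid) := trivial
        rw [← hUsup] at hz
        refine Submodule.iSup_induction U (motive := fun y => ψ y = 0) hz hψU (map_zero ψ) ?_
        intro a b ha hb
        show ψ (a + b) = 0
        rw [map_add, show ψ a = 0 from ha, show ψ b = 0 from hb, add_zero]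
      ext v
      have hpv : pr ↑v = v := Submodule.linearProjOfIsCompl_apply_left hW v
      have : ψ ↑v = h v := by rw [show ψ ↑v = h (pr ↑v) from rfl, hpv]
      rw [LinearMap.zero_apply, ← this, hψ ↑v]
    have hbaer : L31Helpers.BaerCrit R ↥S := by
      intro I f
      by_cases hf0 : f = 0
      · exact ⟨0, fun x => by simp [hf0]⟩
      have hkill : ∀ (x : R) (hx : x ∈ I), x ∈ Jid → f ⟨x, hx⟩ = 0 := by
        intro x hx hxJ
        let V : Submodule Rᵐᵒᵖ ↥Jid := (I ⊓ Jid).comap Jid.subtype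
        let h : ↥V →ₗ[Rᵐᵒᵖ] ↥S := (f ∘ₗ Submodule.inclusion (inf_le_left : I ⊓ Jid ≤ I)) ∘ₗ
          (Submodule.comapSubtypeEquivOfLe (inf_le_right : I ⊓ Jid ≤ Jid)).toLinearMap
        have h0 := hzero V h
        have hxV : (⟨x, hxJ⟩ : ↥Jid) ∈ V := by
          show (x : R) ∈ I ⊓ Jid
          exact ⟨hx, hxJ⟩
        have h1 := congrArg (fun F => F (⟨⟨x, hxJ⟩, hxV⟩ : ↥V)) h0
        simp only [LinearMap.zero_apply] at h1
        rw [← h1]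
        rfl
      obtain ⟨F, hF1, hF2⟩ := L31Helpers.glueZero I Jid f hkill
      obtain ⟨x0, hx0⟩ : ∃ x0 : ↥I, f x0 ≠ 0 := by
        by_contra h
        push_neg at h
        exact hf0 (LinearMap.ext h)
      have hx0L : (x0 : R) ∈ (I ⊔ Jid) := Submodule.mem_sup_left x0.2
      have hFx0 : F ⟨x0, hx0L⟩ ≠ 0 := by
        rw [hF1 _ x0.2]
        simpa using hx0
      set K' := (LinearMap.ker F).map (I ⊔ Jid).subtype with hK'def
      have hJK' : Jid ≤ K' := by
        intro y hy
        exact ⟨⟨y, Submodule.mem_sup_right hy⟩, LinearMap.mem_ker.mpr (hF2 y hy _), rfl⟩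
      have hx0K' : (x0 : R) ∉ K' := by
        rintro ⟨w, hw, hweq⟩
        have : w = ⟨x0, hx0L⟩ := Subtype.ext hweq
        rw [this] at hw
        exact hFx0 (LinearMap.mem_ker.mp hw)
      have hK'top : K' ≠ ⊤ := fun h => hx0K' (h ▸ trivial)
      obtain ⟨m, hmco, hK'm, hx0m⟩ :=
        L31Helpers.exists_coatom_above c hc hV K' hJK' hK'top x0 hx0K'
      have hLm : ∀ (z : R) (hz : z ∈ (I ⊔ Jid)), z ∈ m → F ⟨z, hz⟩ = 0 := by
        intro z hz hzm
        have hWne : ((I ⊔ Jid) ⊓ m).comap (I ⊔ Jid).subtype ≠ ⊤ := by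
          intro h
          have hmem : (⟨x0, hx0L⟩ : ↥(I ⊔ Jid)) ∈ ((I ⊔ Jid) ⊓ m).comap (I ⊔ Jid).subtype := h ▸ trivial
          exact hx0m (hmem.2)
        have hker_le : LinearMap.ker F ≤ ((I ⊔ Jid) ⊓ m).comap (I ⊔ Jid).subtype := by
          intro w hw
          have hwK' : (w : R) ∈ K' := ⟨w, hw, rfl⟩
          exact ⟨w.2, hK'm hwK'⟩
        have hWker := L31Helpers.ker_coatom_aux hS F _ hker_le hWne
        have : (⟨z, hz⟩ : ↥(I ⊔ Jid)) ∈ ((I ⊔ Jid) ⊓ m).comap (I ⊔ Jid).subtype := ⟨hz, hzm⟩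
        exact LinearMap.mem_ker.mp (hWker this)
      obtain ⟨G, hG1, hG2⟩ := L31Helpers.glueZero (I ⊔ Jid) m F hLm
      have hLm_top : (I ⊔ Jid) ⊔ m = ⊤ := by
        rcases lt_or_eq_of_le (le_sup_right : m ≤ (I ⊔ Jid) ⊔ m) with h | h
        · exact hmco.2 _ h
        · exfalso
          apply hx0m
          have h1 : (x0 : R) ∈ (I ⊔ Jid) ⊔ m := Submodule.mem_sup_left hx0L
          rw [← h] at h1
          exact h1
      refine ⟨G ∘ₗ (LinearEquiv.ofTop ((I ⊔ Jid) ⊔ m) hLm_top).symm.toLinearMap, fun x => ?_⟩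
      have hmem2 : (x : R) ∈ (I ⊔ Jid) ⊔ m := hLm_top ▸ trivial
      have hcast : (LinearEquiv.ofTop ((I ⊔ Jid) ⊔ m) hLm_top).symm (x : R) = ⟨x, hmem2⟩ := by
        apply Subtype.ext
        rfl
      simp only [LinearMap.comp_apply, LinearEquiv.coe_coe]
      rw [hcast, hG1 _ (Submodule.mem_sup_left x.2) hmem2,
        hF1 _ x.2 (Submodule.mem_sup_left x.2)]
    obtain ⟨g, hg⟩ := L31Helpers.extension_of_baerCrit ↥S hbaer S LinearMap.id
    have hkerbot : LinearMap.ker g = ⊥ := by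
      by_contra hne
      have h2 := hess _ hne
      have h3 : S ⊓ LinearMap.ker g = S := by
        rcases lt_or_eq_of_le (inf_le_left : S ⊓ LinearMap.ker g ≤ S) with h | h
        · exact absurd (hSatom.2 _ h) h2
        · exact h
      have h4 : S ≤ LinearMap.ker g := inf_eq_left.mp h3
      obtain ⟨s1, hs1S, hs1ne⟩ := Submodule.ne_bot_iff S |>.mp hSatom.1
      have h5 : g s1 = 0 := h4 hs1S
      have h6 : g s1 = ⟨s1, hs1S⟩ := hg ⟨s1, hs1S⟩
      apply hs1ne
      exact congrArg Subtype.val (h6.symm.trans h5)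
    rw [eq_top_iff]
    intro x _
    have hd : g (x - ↑(g x)) = 0 := by
      rw [map_sub, hg (g x)]
      simp
    have hmemk : x - ↑(g x) ∈ LinearMap.ker g := LinearMap.mem_ker.mpr hd
    rw [hkerbot, Submodule.mem_bot] at hmemk
    have hxeq2 : x = ↑(g x) := sub_eq_zero.mp hmemk
    rw [hxeq2]
    exact (g x).2
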